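/- Let θ=(k_r) be a lacunary sequence and f an unbounded modulus function that is not θ-compatible. Then there exists a sequence (B_k) of nonempty closed subsets of ℝ (with the usual metric) and B = {0} such that (B_k) is Wijsman θ-lacunary strong Cesàro convergent to B but not Wijsman θ-lacunary f-strong Cesàro convergent to B. Consequently, if every Wijsman θ-lacunary strong Cesàro convergent sequence of closed subsets of ℝ is Wijsman θ-lacunary f-strong Cesàro convergent to the same limit, then f is θ-compatible. -/
import Mathlib


open Filter Metric Set

/-- `f : ℝ → ℝ` is an (unbounded) modulus function (considered on `[0,∞)`):
`f x = 0 ↔ x = 0`, subadditive, increasing, continuous from the right at `0`,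
and unbounded. -/
def IsModulus (f : ℝ → ℝ) : Prop :=
  (∀ x ∈ Set.Ici (0:ℝ), 0 ≤ f x) ∧
  (∀ x ∈ Set.Ici (0:ℝ), (f x = 0 ↔ x = 0)) ∧
  (∀ x ∈ Set.Ici (0:ℝ), ∀ y ∈ Set.Ici (0:ℝ), f (x + y) ≤ f x + f y) ∧
  MonotoneOn f (Set.Ici (0:ℝ)) ∧
  ContinuousWithinAt f (Set.Ici (0:ℝ)) 0 ∧
  (∀ M : ℝ, ∃ x ∈ Set.Ici (0:ℝ), M < f x)

/-- `φ(ε) = limsup_n f(nε)/f(n)`. -/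
noncomputable def modPhi (f : ℝ → ℝ) (ε : ℝ) : ℝ :=
  Filter.limsup (fun n : ℕ => f ((n : ℝ) * ε) / f (n : ℝ)) Filter.atTop

/-- A modulus function is compatible if `φ(ε) → 0` as `ε → 0⁺`. -/
def Compatible (f : ℝ → ℝ) : Prop :=
  Filter.Tendsto (modPhi f) (nhdsWithin 0 (Set.Ioi 0)) (nhds 0)

/-- Wijsman statistical convergence of a sequence of subsets of a metric space. -/
def WijsmanStatConv {X : Type*} [MetricSpace X] (A : ℕ → Set X) (B : Set X) : Prop :=
  ∀ x : X, ∀ ε > (0:ℝ),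
    Filter.Tendsto (fun n : ℕ =>
      (((Finset.range n).filter
        (fun j => ε < |infDist x (A j) - infDist x B|)).card : ℝ) / (n : ℝ))
      Filter.atTop (nhds 0)

/-- Wijsman `f`-statistical convergence of a sequence of subsets of a metric space. -/
def WijsmanFStatConv {X : Type*} [MetricSpace X] (f : ℝ → ℝ) (A : ℕ → Set X)
    (B : Set X) : Prop :=
  ∀ x : X, ∀ ε > (0:ℝ),
    Filter.Tendsto (fun n : ℕ =>
      f ((((Finset.range n).filter
        (fun j => ε < |infDist x (A j) - infDist x B|)).card : ℝ)) / f (n : ℝ))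
      Filter.atTop (nhds 0)

/-- A real sequence is `f`-strong Cesàro convergent to `L`. -/
def FStrongCesaro (f : ℝ → ℝ) (x : ℕ → ℝ) (L : ℝ) : Prop :=
  Filter.Tendsto (fun n : ℕ =>
    f (∑ j ∈ Finset.range n, |x j - L|) / f (n : ℝ)) Filter.atTop (nhds 0)

/-- Wijsman `f`-strong Cesàro convergence. -/
def WijsmanFStrongCesaro {X : Type*} [MetricSpace X] (f : ℝ → ℝ) (A : ℕ → Set X)
    (B : Set X) : Prop :=
  ∀ x : X, FStrongCesaro f (fun j => infDist x (A j)) (infDist x B)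

/-- Wijsman strong Cesàro convergence (the case `f = id`). -/
def WijsmanStrongCesaro {X : Type*} [MetricSpace X] (A : ℕ → Set X) (B : Set X) : Prop :=
  ∀ x : X,
    Filter.Tendsto (fun n : ℕ =>
      (∑ j ∈ Finset.range n, |infDist x (A j) - infDist x B|) / (n : ℝ))
      Filter.atTop (nhds 0)

/-- A real sequence is uniformly integrable. -/
def UnifIntegrable (x : ℕ → ℝ) : Prop :=
  Filter.Tendsto (fun c : ℝ =>
    ⨆ n : ℕ, (∑ j ∈ Finset.range n, if c ≤ |x j| then |x j| else 0) / (n : ℝ))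
    Filter.atTop (nhds 0)

/-- Wijsman uniform integrability. -/
def WijsmanUnifIntegrable {X : Type*} [MetricSpace X] (A : ℕ → Set X) : Prop :=
  ∀ x : X, UnifIntegrable (fun j => infDist x (A j))

/-- A lacunary sequence: strictly increasing, starting at `0`,
with gaps `h_r = k_{r+1} - k_r → ∞`. -/
def IsLacunary (k : ℕ → ℕ) : Prop :=
  k 0 = 0 ∧ StrictMono k ∧
    Filter.Tendsto (fun r : ℕ => k (r + 1) - k r) Filter.atTop Filter.atTop

/-- The gaps `h_r` of a lacunary sequence. -/
def lacH (k : ℕ → ℕ) (r : ℕ) : ℕ := k (r + 1) - k r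

/-- The blocks `I_r = (k_r, k_{r+1}]` of a lacunary sequence. -/
def lacI (k : ℕ → ℕ) (r : ℕ) : Finset ℕ := Finset.Ioc (k r) (k (r + 1))

/-- `φ_θ(ε) = limsup_t f(h_t ε)/f(h_t)`. -/
noncomputable def modPhiTheta (f : ℝ → ℝ) (k : ℕ → ℕ) (ε : ℝ) : ℝ :=
  Filter.limsup (fun t : ℕ => f ((lacH k t : ℝ) * ε) / f ((lacH k t : ℝ))) Filter.atTop

/-- `f` is `θ`-compatible if `φ_θ(ε) → 0` as `ε → 0⁺`. -/
def ThetaCompatible (f : ℝ → ℝ) (k : ℕ → ℕ) : Prop :=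
  Filter.Tendsto (modPhiTheta f k) (nhdsWithin 0 (Set.Ioi 0)) (nhds 0)

/-- Wijsman `θ`-lacunary statistical convergence. -/
def WijsmanLacStatConv {X : Type*} [MetricSpace X] (k : ℕ → ℕ) (A : ℕ → Set X)
    (B : Set X) : Prop :=
  ∀ x : X, ∀ ε > (0:ℝ),
    Filter.Tendsto (fun r : ℕ =>
      (((lacI k r).filter
        (fun j => ε < |infDist x (A j) - infDist x B|)).card : ℝ) / (lacH k r : ℝ))
      Filter.atTop (nhds 0)

/-- Wijsman `θ`-lacunary `f`-statistical convergence. -/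
def WijsmanLacFStatConv {X : Type*} [MetricSpace X] (f : ℝ → ℝ) (k : ℕ → ℕ)
    (A : ℕ → Set X) (B : Set X) : Prop :=
  ∀ x : X, ∀ ε > (0:ℝ),
    Filter.Tendsto (fun r : ℕ =>
      f ((((lacI k r).filter
        (fun j => ε < |infDist x (A j) - infDist x B|)).card : ℝ)) / f ((lacH k r : ℝ)))
      Filter.atTop (nhds 0)

/-- Wijsman `θ`-lacunary `f`-strong Cesàro convergence. -/
def WijsmanLacFStrongCesaro {X : Type*} [MetricSpace X] (f : ℝ → ℝ) (k : ℕ → ℕ)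
    (A : ℕ → Set X) (B : Set X) : Prop :=
  ∀ x : X,
    Filter.Tendsto (fun r : ℕ =>
      f (∑ j ∈ lacI k r, |infDist x (A j) - infDist x B|) / f ((lacH k r : ℝ)))
      Filter.atTop (nhds 0)

/-- Wijsman `θ`-lacunary strong Cesàro convergence (the case `f = id`). -/
def WijsmanLacStrongCesaro {X : Type*} [MetricSpace X] (k : ℕ → ℕ)
    (A : ℕ → Set X) (B : Set X) : Prop :=
  ∀ x : X,
    Filter.Tendsto (fun r : ℕ =>
      (∑ j ∈ lacI k r, |infDist x (A j) - infDist x B|) / (lacH k r : ℝ))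
      Filter.atTop (nhds 0)

/-- A real sequence is `θ`-lacunary uniformly integrable. -/
def LacUnifIntegrable (k : ℕ → ℕ) (x : ℕ → ℝ) : Prop :=
  Filter.Tendsto (fun M : ℝ =>
    ⨆ t : ℕ, (∑ j ∈ lacI k t, if M ≤ |x j| then |x j| else 0) / (lacH k t : ℝ))
    Filter.atTop (nhds 0)

/-- Wijsman `θ`-lacunary uniform integrability. -/
def WijsmanLacUnifIntegrable {X : Type*} [MetricSpace X] (k : ℕ → ℕ)
    (A : ℕ → Set X) : Prop :=
  ∀ x : X, LacUnifIntegrable k (fun j => infDist x (A j))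



section Aux

lemma lacI_unique {k : ℕ → ℕ} (hk : StrictMono k) {j r s : ℕ}
    (hr : j ∈ lacI k r) (hs : j ∈ lacI k s) : r = s := by
  simp only [lacI, Finset.mem_Ioc] at hr hs
  by_contra hne
  rcases lt_or_gt_of_ne hne with h | h
  · exact absurd hs.1 (not_lt.2 (hr.2.trans (hk.monotone h)))
  · exact absurd hr.1 (not_lt.2 (hs.2.trans (hk.monotone h)))

lemma lacH_pos {k : ℕ → ℕ} (hk : StrictMono k) (r : ℕ) : 0 < lacH k r :=
  Nat.sub_pos_of_lt (hk (Nat.lt_succ_self r))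

lemma lacI_card {k : ℕ → ℕ} (r : ℕ) : (lacI k r).card = lacH k r := by
  simp [lacI, lacH]

end Aux

theorem exists_lac_cesaro_not_lac_fcesaro_of_not_thetaCompatible
    (k : ℕ → ℕ) (hk : IsLacunary k)
    (f : ℝ → ℝ) (hf : IsModulus f) (hnc : ¬ ThetaCompatible f k) :
    (∃ B : ℕ → Set ℝ, (∀ n, (B n).Nonempty ∧ IsClosed (B n)) ∧
      WijsmanLacStrongCesaro k B ({0} : Set ℝ) ∧
      ¬ WijsmanLacFStrongCesaro f k B ({0} : Set ℝ)) ∧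
    ((∀ (C : ℕ → Set ℝ) (D : Set ℝ), (∀ n, (C n).Nonempty ∧ IsClosed (C n)) →
        D.Nonempty → IsClosed D → WijsmanLacStrongCesaro k C D →
        WijsmanLacFStrongCesaro f k C D) →
      ThetaCompatible f k) := by

  classical
  obtain ⟨hf0, hfz, hfadd, hfmono, hfcont, hfunb⟩ := hf
  obtain ⟨hk0, hkmono, hkgap⟩ := hk
  set u : ℝ → ℕ → ℝ := fun ε t => f ((lacH k t : ℝ) * ε) / f ((lacH k t : ℝ)) with hu_def
  have hH0 : ∀ t : ℕ, (0:ℝ) ≤ (lacH k t : ℝ) := fun t => Nat.cast_nonneg _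
  have hu_nonneg : ∀ ε : ℝ, 0 ≤ ε → ∀ t, 0 ≤ u ε t := by
    intro ε hε t
    exact div_nonneg (hf0 _ (mul_nonneg (hH0 t) hε)) (hf0 _ (hH0 t))
  have hu_le : ∀ ε ε' : ℝ, 0 ≤ ε → ε ≤ ε' → ∀ t, u ε t ≤ u ε' t := by
    intro ε ε' hε hεε' t
    have h1 : (0:ℝ) ≤ (lacH k t : ℝ) * ε := mul_nonneg (hH0 t) hε
    have h2 : (0:ℝ) ≤ (lacH k t : ℝ) * ε' := h1.trans (by
      exact mul_le_mul_of_nonneg_left hεε' (hH0 t))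
    have hnum : f ((lacH k t : ℝ) * ε) ≤ f ((lacH k t : ℝ) * ε') :=
      hfmono h1 h2 (mul_le_mul_of_nonneg_left hεε' (hH0 t))
    exact div_le_div_of_nonneg_right hnum (hf0 _ (hH0 t))
  have hu_le_one : ∀ ε : ℝ, 0 ≤ ε → ε ≤ 1 → ∀ t, u ε t ≤ 1 := by
    intro ε hε hε1 t
    have hnum : f ((lacH k t : ℝ) * ε) ≤ f ((lacH k t : ℝ)) := by
      have := hu_le ε 1 hε hε1 t
      exact hfmono (mul_nonneg (hH0 t) hε) (hH0 t)
        (by nlinarith [hH0 t])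
    exact div_le_one_of_le₀ hnum (hf0 _ (hH0 t))
  -- monotonicity and nonnegativity of modPhiTheta on (0,1]
  have hbdd : ∀ ε : ℝ, 0 ≤ ε → ε ≤ 1 →
      Filter.IsBoundedUnder (· ≤ ·) Filter.atTop (u ε) :=
    fun ε hε hε1 => Filter.isBoundedUnder_of ⟨1, hu_le_one ε hε hε1⟩
  have hcobdd : ∀ ε : ℝ, 0 ≤ ε → Filter.IsCoboundedUnder (· ≤ ·) Filter.atTop (u ε) :=
    fun ε hε => Filter.isCoboundedUnder_le_of_le _ (hu_nonneg ε hε)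
  have hcobdd' : ∀ ε : ℝ, 0 ≤ ε → ε ≤ 1 →
      Filter.IsCoboundedUnder (· ≥ ·) Filter.atTop (u ε) :=
    fun ε hε hε1 => (hbdd ε hε hε1).isCoboundedUnder_ge
  have hphi_nonneg : ∀ ε : ℝ, 0 < ε → ε ≤ 1 → 0 ≤ modPhiTheta f k ε := by
    intro ε hε hε1
    exact Filter.le_limsup_of_frequently_le
      (Filter.Frequently.of_forall (hu_nonneg ε hε.le)) (hbdd ε hε.le hε1)
  have hphi_mono : ∀ ε ε' : ℝ, 0 < ε → ε ≤ ε' → ε' ≤ 1 →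
      modPhiTheta f k ε ≤ modPhiTheta f k ε' := by
    intro ε ε' hε hεε' hε1
    exact Filter.limsup_le_limsup
      (Filter.Eventually.of_forall (hu_le ε ε' hε.le hεε' ))
      (hcobdd ε hε.le) (hbdd ε' (hε.le.trans hεε') hε1)
  -- extract c > 0 with c ≤ φ_θ(1/(m+1)) for all m
  have key : ∃ c > (0:ℝ), ∀ m : ℕ, c ≤ modPhiTheta f k (1 / ((m:ℝ) + 1)) := by
    by_contra h
    push_neg at h
    apply hnc
    show Filter.Tendsto (modPhiTheta f k) (nhdsWithin 0 (Set.Ioi 0)) (nhds 0)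
    rw [NormedAddCommGroup.tendsto_nhds_zero]
    intro δ hδ
    obtain ⟨m, hm⟩ := h δ hδ
    have hb : (0:ℝ) < 1 / ((m:ℝ)+1) := by positivity
    filter_upwards [Ioo_mem_nhdsGT_of_mem (show (0:ℝ) ∈ Set.Ico 0 (1/((m:ℝ)+1)) from
      ⟨le_refl _, hb⟩)] with ε hε
    have h1 : ε ≤ 1 := hε.2.le.trans (by
      rw [div_le_one (by positivity)]; linarith [Nat.cast_nonneg (α := ℝ) m])
    have h2 : modPhiTheta f k ε ≤ modPhiTheta f k (1/((m:ℝ)+1)) := by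
      apply hphi_mono ε _ hε.1 hε.2.le
      rw [div_le_one (by positivity)]; linarith [Nat.cast_nonneg (α := ℝ) m]
    have h3 : 0 ≤ modPhiTheta f k ε := hphi_nonneg ε hε.1 h1
    rw [Real.norm_eq_abs, abs_of_nonneg h3]
    exact lt_of_le_of_lt h2 hm
  obtain ⟨c, hc, hcle⟩ := key
  -- frequently: for each m, frequently many t with c/2 < u (1/(m+1)) t
  have hfreq : ∀ m : ℕ, ∃ᶠ t in Filter.atTop, c/2 < u (1/((m:ℝ)+1)) t := by
    intro m
    have hb : (0:ℝ) < 1 / ((m:ℝ)+1) := by positivity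
    have h1 : (1:ℝ)/((m:ℝ)+1) ≤ 1 := by
      rw [div_le_one (by positivity)]; linarith [Nat.cast_nonneg (α := ℝ) m]
    exact Filter.frequently_lt_of_lt_limsup (hcobdd _ hb.le)
      (lt_of_lt_of_le (by linarith) (hcle m))
  have hfreq' : ∀ m N : ℕ, ∃ t, N ≤ t ∧ c/2 < u (1/((m:ℝ)+1)) t := by
    intro m N
    obtain ⟨t, ht1, ht2⟩ := ((hfreq m).and_eventually (Filter.eventually_ge_atTop N)).exists
    exact ⟨t, ht2, ht1⟩
  choose F hF1 hF2 using fun p : ℕ × ℕ => hfreq' p.1 p.2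
  -- build strictly increasing t : ℕ → ℕ
  set g : ℕ → ℕ := fun m => Nat.rec (motive := fun _ => ℕ) (F (0, 0))
    (fun m ih => F (m+1, ih+1)) m with hg_def
  have hg_succ : ∀ m, g m < g (m+1) := by
    intro m
    have := hF1 (m+1, g m + 1)
    simpa using lt_of_lt_of_le (Nat.lt_succ_self (g m)) this
  have hgmono : StrictMono g := strictMono_nat_of_lt_succ hg_succ
  have hgP : ∀ m : ℕ, c/2 < u (1/((m:ℝ)+1)) (g m) := by
    intro m
    match m with
    | 0 => exact hF2 (0, 0)
    | (m+1) => exact hF2 (m+1, g m + 1)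
  -- define the sequence of sets
  set a : ℕ → ℝ := fun j =>
    if h : ∃ m, j ∈ lacI k (g m) then 1/((h.choose : ℝ)+1) else 0 with ha_def
  have ha_mem : ∀ m j, j ∈ lacI k (g m) → a j = 1/((m:ℝ)+1) := by
    intro m j hj
    have hex : ∃ m', j ∈ lacI k (g m') := ⟨m, hj⟩
    have : g hex.choose = g m := lacI_unique hkmono hex.choose_spec hj
    have hm : hex.choose = m := hgmono.injective this
    simp only [ha_def, dif_pos hex, hm]
  have ha_notmem : ∀ j, (∀ m, j ∉ lacI k (g m)) → a j = 0 := by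
    intro j hj
    simp only [ha_def]
    rw [dif_neg (not_exists.mpr hj)]
  have ha_nonneg : ∀ j, 0 ≤ a j := by
    intro j
    by_cases h : ∃ m, j ∈ lacI k (g m)
    · obtain ⟨m, hm⟩ := h; rw [ha_mem m j hm]; positivity
    · push_neg at h; rw [ha_notmem j h]
  set B : ℕ → Set ℝ := fun j => {a j} with hB_def
  -- sums over blocks
  have hS_eq : ∀ m, ∑ j ∈ lacI k (g m), a j = (lacH k (g m) : ℝ) * (1/((m:ℝ)+1)) := by
    intro m
    rw [Finset.sum_congr rfl (fun j hj => ha_mem m j hj), Finset.sum_const, nsmul_eq_mul,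
      lacI_card]
  have hS_zero : ∀ r, (∀ m, r ≠ g m) → ∑ j ∈ lacI k r, a j = 0 := by
    intro r hr
    apply Finset.sum_eq_zero
    intro j hj
    apply ha_notmem
    intro m hm
    exact hr m (lacI_unique hkmono hj hm)
  have hinf : ∀ (x : ℝ) j, infDist x (B j) = |x - a j| := by
    intro x j
    rw [hB_def]
    simp [Metric.infDist_singleton, Real.dist_eq]
  have hinf0 : ∀ x : ℝ, infDist x ({0} : Set ℝ) = |x| := by
    intro x
    simp [Metric.infDist_singleton, Real.dist_eq]
  have hHpos : ∀ r, (0:ℝ) < (lacH k r : ℝ) := by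
    intro r
    exact_mod_cast lacH_pos hkmono r
  -- the ratio S r / h_r tends to 0
  have hSh : Filter.Tendsto (fun r => (∑ j ∈ lacI k r, a j) / (lacH k r : ℝ))
      Filter.atTop (nhds 0) := by
    rw [Metric.tendsto_atTop]
    intro δ hδ
    obtain ⟨M, hM⟩ := exists_nat_one_div_lt hδ
    refine ⟨g M + 1, fun r hr => ?_⟩
    have hnn : 0 ≤ (∑ j ∈ lacI k r, a j) / (lacH k r : ℝ) :=
      div_nonneg (Finset.sum_nonneg fun j _ => ha_nonneg j) (hHpos r).le
    rw [Real.dist_eq, sub_zero, abs_of_nonneg hnn]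
    by_cases h : ∃ m, r = g m
    · obtain ⟨m, rfl⟩ := h
      have hmM : M < m := by
        by_contra hmm
        push_neg at hmm
        exact absurd (hgmono.monotone hmm) (by omega)
      rw [hS_eq m, mul_comm, mul_div_assoc, div_self (hHpos _).ne', mul_one]
      calc (1:ℝ)/((m:ℝ)+1) ≤ 1/((M:ℝ)+1) := by
            apply one_div_le_one_div_of_le (by positivity)
            have : (M:ℝ) ≤ (m:ℝ) := by exact_mod_cast hmM.le
            linarith
        _ < δ := hM
    · push_neg at h
      rw [hS_zero r h, zero_div]
      exact hδ
  refine ⟨⟨B, fun n => ⟨⟨a n, rfl⟩, isClosed_singleton⟩, ?_, ?_⟩, ?_⟩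
  · -- Wijsman lacunary strong Cesaro convergence
    intro x
    apply squeeze_zero (g := fun r => (∑ j ∈ lacI k r, a j) / (lacH k r : ℝ))
    · intro r; positivity
    · intro r
      apply div_le_div_of_nonneg_right (c := (lacH k r : ℝ)) ?_ (hHpos r).le |>.trans_eq rfl
      apply Finset.sum_le_sum
      intro j hj
      rw [hinf x j, hinf0 x]
      calc |(|x - a j| - |x|)| ≤ |x - a j - x| := abs_abs_sub_abs_le_abs_sub _ _
        _ = a j := by rw [show x - a j - x = -(a j) by ring, abs_neg, abs_of_nonneg (ha_nonneg j)]
    · exact hSh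
  · -- not Wijsman lacunary f-strong Cesaro
    intro hcontra
    have h0 := hcontra 0
    have h0' := h0.comp hgmono.tendsto_atTop
    rw [Metric.tendsto_atTop] at h0'
    obtain ⟨N, hN⟩ := h0' (c/2) (by linarith)
    have hNN := hN N le_rfl
    have heq : (∑ j ∈ lacI k (g N), |infDist (0:ℝ) (B j) - infDist (0:ℝ) ({0}:Set ℝ)|)
        = (lacH k (g N) : ℝ) * (1/((N:ℝ)+1)) := by
      rw [← hS_eq N]
      apply Finset.sum_congr rfl
      intro j hj
      rw [hinf 0 j, hinf0 0, abs_zero, sub_zero, zero_sub, abs_neg,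
        abs_of_nonneg (ha_nonneg j), abs_of_nonneg (ha_nonneg j)]
    simp only [Function.comp] at hNN
    rw [Real.dist_eq, sub_zero, heq] at hNN
    have := hgP N
    simp only [hu_def] at this
    exact absurd (lt_of_lt_of_le this (le_abs_self _)) (not_lt.2 hNN.le)
  · -- consequence
    intro H
    exfalso
    -- reuse the construction above
    apply absurd (H B ({0} : Set ℝ) (fun n => ⟨⟨a n, rfl⟩, isClosed_singleton⟩)
      ⟨0, rfl⟩ isClosed_singleton ?_) ?_
    · intro x
      apply squeeze_zero (g := fun r => (∑ j ∈ lacI k r, a j) / (lacH k r : ℝ))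
      · intro r; positivity
      · intro r
        apply div_le_div_of_nonneg_right (c := (lacH k r : ℝ)) ?_ (hHpos r).le |>.trans_eq rfl
        apply Finset.sum_le_sum
        intro j hj
        rw [hinf x j, hinf0 x]
        calc |(|x - a j| - |x|)| ≤ |x - a j - x| := abs_abs_sub_abs_le_abs_sub _ _
          _ = a j := by
              rw [show x - a j - x = -(a j) by ring, abs_neg, abs_of_nonneg (ha_nonneg j)]
      · exact hSh
    · intro hcontra
      have h0 := hcontra 0
      have h0' := h0.comp hgmono.tendsto_atTop
      rw [Metric.tendsto_atTop] at h0'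
      obtain ⟨N, hN⟩ := h0' (c/2) (by linarith)
      have hNN := hN N le_rfl
      have heq : (∑ j ∈ lacI k (g N), |infDist (0:ℝ) (B j) - infDist (0:ℝ) ({0}:Set ℝ)|)
          = (lacH k (g N) : ℝ) * (1/((N:ℝ)+1)) := by
        rw [← hS_eq N]
        apply Finset.sum_congr rfl
        intro j hj
        rw [hinf 0 j, hinf0 0, abs_zero, sub_zero, zero_sub, abs_neg,
          abs_of_nonneg (ha_nonneg j), abs_of_nonneg (ha_nonneg j)]
      simp only [Function.comp] at hNN
      rw [Real.dist_eq, sub_zero, heq] at hNN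
      have := hgP N
      simp only [hu_def] at this
      exact absurd (lt_of_lt_of_le this (le_abs_self _)) (not_lt.2 hNN.le)
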